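/- arXiv:1505.04308 — 7 statements merged into one kernel-verified Lean document; each statement's English description precedes it below -/
import Mathlib

section
/- Consider the pair breaking problem for parameter Z. Suppose that there exists a colouring function C : X → {1,…,c} for which there exists a symmetry breaking function B. Then for every integer k ≥ 2 and every subset S ⊆ {1,…,Z}, if |S| ≥ (3/2)·k! + Σ_{i=0}^{k−3} k!/(k−i)! (where the sum is empty when k = 2, and note (3/2)·k! is an integer since k! is even for k ≥ 2), then c_S ≥ k, i.e., C uses at least k distinct colours on pairs of elements of S. -/
private lemma two_pow_le_fact : ∀ n : ℕ, 1 ≤ n → 2 ^ (n - 1) ≤ Nat.factorial n := by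
  intro n
  induction n with
  | zero => simp
  | succ m ih =>
    intro _
    rcases Nat.eq_zero_or_pos m with hm | hm
    · subst hm; simp [Nat.factorial]
    · have h1 := ih hm
      have : m + 1 - 1 = (m - 1) + 1 := by omega
      rw [this, pow_succ, Nat.factorial_succ]
      calc 2 ^ (m - 1) * 2 ≤ Nat.factorial m * 2 := by
            exact Nat.mul_le_mul_right 2 h1
        _ ≤ (m + 1) * Nat.factorial m := by
            rw [mul_comm]; exact Nat.mul_le_mul_right _ (by omega)

/-- Lemma 1 of the paper: if a colouring `C` of pairs from `{1,…,Z}` admits a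
symmetry breaking function, then for every `k ≥ 2` and every subset `S` of
`{1,…,Z}` with `|S| ≥ (3/2)·k! + Σ_{i=0}^{k−3} k!/(k−i)!`, the colouring `C`
uses at least `k` distinct colours on pairs of elements of `S`. -/
theorem pair_breaking_colour_lower_bound
    (Z c : ℕ) (hZ : 0 < Z) (hc : 0 < c)
    (C : ℕ → ℕ → ℕ)
    (hC : ∀ a b : ℕ, 1 ≤ a → a < b → b ≤ Z → C a b ∈ Finset.Icc 1 c)
    (B : ℕ → ℕ → Bool)
    (hB : ∀ a b : ℕ, 1 ≤ a → a < b → b ≤ Z → B a (C a b) ≠ B b (C a b))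
    (k : ℕ) (hk : 2 ≤ k)
    (S : Finset ℕ) (hS : S ⊆ Finset.Icc 1 Z)
    (hcard : 3 * Nat.factorial k / 2 +
        ∑ i ∈ Finset.range (k - 2), Nat.factorial k / Nat.factorial (k - i)
      ≤ S.card) :
    k ≤ (((S ×ˢ S).filter (fun p => p.1 < p.2)).image
          (fun p => C p.1 p.2)).card := by
  set T := (((S ×ˢ S).filter (fun p => p.1 < p.2)).image
          (fun p => C p.1 p.2)) with hT
  by_contra hcon
  push_neg at hcon
  -- key: for u < v both in S, the colour is in T and breaks
  have key : ∀ u ∈ S, ∀ v ∈ S, u < v →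
      C u v ∈ T ∧ B u (C u v) ≠ B v (C u v) := by
    intro u hu v hv huv
    have hu' := Finset.mem_Icc.mp (hS hu)
    have hv' := Finset.mem_Icc.mp (hS hv)
    refine ⟨?_, hB u v hu'.1 huv hv'.2⟩
    rw [hT]
    apply Finset.mem_image.mpr
    exact ⟨(u, v), Finset.mem_filter.mpr ⟨Finset.mem_product.mpr ⟨hu, hv⟩, huv⟩, rfl⟩
  -- injectivity
  have hinj : Set.InjOn (fun v => (fun γ : T => B v γ.1)) (S : Set ℕ) := by
    intro u hu v hv huv
    by_contra hne
    rcases Ne.lt_or_gt hne with hlt | hlt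
    · obtain ⟨hmem, hbrk⟩ := key u hu v hv hlt
      exact hbrk (congrFun huv ⟨C u v, hmem⟩)
    · obtain ⟨hmem, hbrk⟩ := key v hv u hu hlt
      exact hbrk (congrFun huv ⟨C v u, hmem⟩).symm
  have hS2 : S.card ≤ 2 ^ T.card := by
    have := Finset.card_le_card_of_injOn (fun v => (fun γ : T => B v γ.1))
      (fun a _ => Finset.mem_univ _) hinj
    rwa [Finset.card_univ, Fintype.card_fun, Fintype.card_coe, Fintype.card_bool] at this
  -- arithmetic contradiction
  have h1 : 2 ^ T.card ≤ 2 ^ (k - 1) := Nat.pow_le_pow_right (by norm_num) (by omega)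
  have h2 : 2 ^ (k - 1) ≤ Nat.factorial k := two_pow_le_fact k (by omega)
  have h3 : Nat.factorial k + Nat.factorial k / 2 ≤ 3 * Nat.factorial k / 2 := by
    have : 3 * Nat.factorial k = Nat.factorial k + 2 * Nat.factorial k := by ring
    rw [this]
    omega
  have h4 : 2 ≤ Nat.factorial k := by
    calc 2 = Nat.factorial 2 := rfl
      _ ≤ Nat.factorial k := Nat.factorial_le hk
  have h5 : 1 ≤ Nat.factorial k / 2 := Nat.one_le_div_iff (by norm_num) |>.mpr h4
  omega
end

section
/- Consider the pair breaking problem for parameter Z. Let k ≥ 2 be an integer and suppose Z ≥ 3·k^k. Then for every colouring function C : X → {1,…,c} that admits a symmetry breaking function, we have c ≥ k. -/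
/-- For the pair breaking problem with parameter `Z ≥ 3·k^k` (`k ≥ 2`), every
colouring `C` into colours `{1,…,c}` admitting a symmetry breaking function
satisfies `c ≥ k`. -/
theorem pair_breaking_colour_count
    (Z c k : ℕ) (hc : 0 < c) (hk : 2 ≤ k) (hZ : 3 * k ^ k ≤ Z)
    (C : ℕ → ℕ → ℕ)
    (hC : ∀ a b : ℕ, 1 ≤ a → a < b → b ≤ Z → C a b ∈ Finset.Icc 1 c)
    (B : ℕ → ℕ → Bool)
    (hB : ∀ a b : ℕ, 1 ≤ a → a < b → b ≤ Z → B a (C a b) ≠ B b (C a b)) :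
    k ≤ c := by
  by_contra h
  push_neg at h
  -- The signature map is injective on {1,…,Z}
  have key : ∀ a b : ℕ, a ∈ Finset.Icc 1 Z → b ∈ Finset.Icc 1 Z → a < b →
      (fun i : Fin c => B a (i + 1)) ≠ (fun i : Fin c => B b (i + 1)) := by
    intro a b ha hb hlt hab
    simp only [Finset.mem_Icc] at ha hb
    have hγ := hC a b ha.1 hlt hb.2
    simp only [Finset.mem_Icc] at hγ
    have h1 : C a b - 1 < c := by omega
    have := congrFun hab ⟨C a b - 1, h1⟩
    simp only at this
    have heq : C a b - 1 + 1 = C a b := by omega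
    rw [heq] at this
    exact hB a b ha.1 hlt hb.2 this
  have hinj : Set.InjOn (fun a => fun i : Fin c => B a (i + 1))
      (Finset.Icc 1 Z : Finset ℕ) := by
    intro a ha b hb hab
    by_contra hne
    rcases lt_or_gt_of_ne hne with hlt | hlt
    · exact key a b ha hb hlt hab
    · exact key b a hb ha hlt hab.symm
  have hcard : (Finset.Icc 1 Z).card ≤ (Finset.univ : Finset (Fin c → Bool)).card :=
    Finset.card_le_card_of_injOn _ (fun _ _ => Finset.mem_univ _) hinj
  rw [Nat.card_Icc, Finset.card_univ] at hcard
  simp only [Fintype.card_fun, Fintype.card_bool, Fintype.card_fin] at hcard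
  have hZc : Z ≤ 2 ^ c := by omega
  have h2 : (2:ℕ) ^ c ≤ 2 ^ (k - 1) := Nat.pow_le_pow_right (by norm_num) (by omega)
  have h3 : (2:ℕ) ^ k ≤ k ^ k := Nat.pow_le_pow_left hk k
  have h4 : (2:ℕ) ^ k = 2 * 2 ^ (k - 1) := by
    rw [← pow_succ']
    congr 1
    omega
  have h5 : 0 < (2:ℕ) ^ (k - 1) := Nat.pow_pos (by norm_num)
  omega
end

section
/- Consider the pair breaking problem for parameter Z with Z ≥ 2. For every colouring function C : X → {1,…,c} that admits a symmetry breaking function, we have 3·(c+1)² > log₂ Z; in particular, c ≥ √((log₂ Z)/3) − 1, so the number of colours is Ω(√(log Z)). -/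
/-- Corollary 1 of the paper: for the pair breaking problem with parameter
`Z ≥ 2`, every colouring admitting a symmetry breaking function uses `c`
colours with `3·(c+1)² > log₂ Z`, hence `c ∈ Ω(√(log Z))`. -/
theorem pair_breaking_colour_sqrt_log_lower_bound
    (Z c : ℕ) (hZ : 2 ≤ Z) (hc : 0 < c)
    (C : ℕ → ℕ → ℕ)
    (hC : ∀ a b : ℕ, 1 ≤ a → a < b → b ≤ Z → C a b ∈ Finset.Icc 1 c)
    (B : ℕ → ℕ → Bool)
    (hB : ∀ a b : ℕ, 1 ≤ a → a < b → b ≤ Z → B a (C a b) ≠ B b (C a b)) :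
    Real.logb 2 (Z : ℝ) < 3 * ((c : ℝ) + 1) ^ 2 := by
  have hZle : Z ≤ 2 ^ c := by
    by_contra h
    push_neg at h
    obtain ⟨a, ha, b, hb, hne, heq⟩ :=
      Finset.exists_ne_map_eq_of_card_lt_of_maps_to
        (s := Finset.Icc 1 Z) (t := (Finset.univ : Finset (Fin c → Bool)))
        (by
          simp only [Nat.card_Icc, Finset.card_univ, Fintype.card_fun,
            Fintype.card_bool, Fintype.card_fin]
          omega)
        (f := fun a => fun i : Fin c => B a (i + 1))
        (by intros; simp)
    simp only [Finset.mem_Icc] at ha hb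
    have key : ∀ a b : ℕ, 1 ≤ a → b ≤ Z → a < b →
        (fun i : Fin c => B a (i + 1)) = (fun i : Fin c => B b (i + 1)) → False := by
      intro a b ha1 hbZ hab heq
      have hγ := hC a b ha1 hab hbZ
      simp only [Finset.mem_Icc] at hγ
      have hBne := hB a b ha1 hab hbZ
      apply hBne
      have := congrFun heq ⟨C a b - 1, by omega⟩
      simpa [Nat.sub_add_cancel hγ.1] using this
    rcases lt_trichotomy a b with hab | hab | hab
    · exact key a b ha.1 hb.2 hab heq
    · exact hne hab
    · exact key b a hb.1 ha.2 hab heq.symm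
  have h1 : Real.logb 2 (Z : ℝ) ≤ c := by
    have : Real.logb 2 (Z : ℝ) ≤ Real.logb 2 ((2 : ℝ) ^ c) := by
      apply Real.logb_le_logb_of_le (b := 2) (by norm_num)
        (by exact_mod_cast Nat.cast_pos.mpr (by omega : 0 < Z))
      exact_mod_cast hZle
    simpa [Real.logb_pow, Real.logb_self_eq_one] using this
  have h2 : (c : ℝ) < 3 * ((c : ℝ) + 1) ^ 2 := by nlinarith [sq_nonneg ((c : ℝ) + 1)]
  linarith
end

section
/- For every natural number y ≥ 4, setting z = y² and x = ⌈y^{3/2}⌉ (the least natural number that is at least the real number y^{3/2}), one has z^x ≥ x! · 2^y; equivalently, z^x / x! ≥ 2^y. (This shows that the family of height-2 markers with z leaves and root degree x is large enough, using x ≤ y^{7/4} and x! ≤ x^x.) -/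
/-- For every natural `y ≥ 4`, with `z = y²` and `x = ⌈y^{3/2}⌉`, one has
`z^x ≥ x! · 2^y`. -/
theorem markers_count_large (y : ℕ) (hy : 4 ≤ y) :
    Nat.factorial ⌈(y : ℝ) ^ ((3 : ℝ) / 2)⌉₊ * 2 ^ y
      ≤ (y ^ 2) ^ ⌈(y : ℝ) ^ ((3 : ℝ) / 2)⌉₊ := by
  set a : ℝ := (y : ℝ) with ha
  set x : ℕ := ⌈a ^ ((3:ℝ)/2)⌉₊ with hxdef
  have ha4 : (4:ℝ) ≤ a := by rw [ha]; exact_mod_cast hy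
  have ha0 : (0:ℝ) < a := by linarith
  have hs0 : (0:ℝ) ≤ Real.sqrt a := Real.sqrt_nonneg a
  have hssq : Real.sqrt a ^ 2 = a := Real.sq_sqrt ha0.le
  have hs2 : (2:ℝ) ≤ Real.sqrt a := by nlinarith
  have h32 : a ^ ((3:ℝ)/2) = a * Real.sqrt a := by
    rw [show (3:ℝ)/2 = 1 + 1/2 by norm_num, Real.rpow_add ha0, Real.rpow_one,
      ← Real.sqrt_eq_rpow]
  have hx1 : a * Real.sqrt a ≤ (x:ℝ) := h32 ▸ Nat.le_ceil _
  have hx2 : (x:ℝ) < a * Real.sqrt a + 1 := by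
    rw [← h32]; exact Nat.ceil_lt_add_one (Real.rpow_nonneg ha0.le _)
  have h2sq : Real.sqrt 2 ^ 2 = 2 := Real.sq_sqrt (by norm_num)
  have h2n : (0:ℝ) ≤ Real.sqrt 2 := Real.sqrt_nonneg 2
  have hsqrt2 : Real.sqrt 2 ≤ 3/2 := by nlinarith
  have hsqrt2' : (1:ℝ) ≤ Real.sqrt 2 := by nlinarith
  have h2y : 2 * y ≤ x := by
    have : ((2 * y : ℕ) : ℝ) ≤ (x:ℝ) := by push_cast; nlinarith
    exact_mod_cast this
  have hfact : Nat.factorial x ≤ x ^ x := Nat.factorial_le_pow x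
  have key : (x:ℝ)^x * 2^y ≤ ((y:ℝ)^2)^x := by
    have step1 : (2:ℝ)^y ≤ Real.sqrt 2 ^ x := by
      calc (2:ℝ)^y = Real.sqrt 2 ^ (2*y) := by rw [pow_mul, h2sq]
        _ ≤ Real.sqrt 2 ^ x := pow_le_pow_right₀ hsqrt2' h2y
    calc (x:ℝ)^x * 2^y ≤ (x:ℝ)^x * Real.sqrt 2 ^ x :=
          mul_le_mul_of_nonneg_left step1 (by positivity)
      _ = ((x:ℝ) * Real.sqrt 2)^x := (mul_pow _ _ _).symm
      _ ≤ (a^2)^x := pow_le_pow_left₀ (by positivity) (by nlinarith) x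
  calc Nat.factorial x * 2^y ≤ x^x * 2^y := Nat.mul_le_mul_right _ hfact
    _ ≤ (y^2)^x := by exact_mod_cast (by push_cast; exact key : ((x^x * 2^y : ℕ) : ℝ) ≤ ((y^2)^x : ℕ))
end

section
/- Let Δ ≥ 2 be an integer and let a : ℕ → ℕ satisfy a(0) = 1, a(1) = Δ + 1, and a(x+2) = 1 + Δ + x + (Δ−1)²·a(x) for all x ≥ 0. Then a(x) ≤ 3·Δ^x for every natural number x. (Here a(x) is the number of nodes of the confusion subtree T_i(x) of height x built from degree parameter Δ, which satisfies exactly this recurrence.) -/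
/-- The size `a x` of the confusion subtree of height `x` with degree
parameter `Δ ≥ 2`, given by `a 0 = 1`, `a 1 = Δ+1` and
`a (x+2) = 1 + Δ + x + (Δ−1)²·a x`, satisfies `a x ≤ 3·Δ^x`. -/
theorem confusion_tree_size_bound (Δ : ℕ) (hΔ : 2 ≤ Δ) (a : ℕ → ℕ)
    (h0 : a 0 = 1) (h1 : a 1 = Δ + 1)
    (hrec : ∀ x : ℕ, a (x + 2) = 1 + Δ + x + (Δ - 1) ^ 2 * a x) :
    ∀ x : ℕ, a x ≤ 3 * Δ ^ x := by
  obtain ⟨d, rfl⟩ : ∃ d, Δ = d + 2 := ⟨Δ - 2, by omega⟩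
  have key : ∀ x, a x ≤ 3 * (d + 2) ^ x ∧ a (x + 1) ≤ 3 * (d + 2) ^ (x + 1) := by
    intro x
    induction x with
    | zero => simp [h0, h1]
    | succ n ih =>
      refine ⟨ih.2, ?_⟩
      have hr := hrec n
      have hs : (d + 2 - 1) = d + 1 := by omega
      rw [hs] at hr
      have h2 : 2 ^ n ≤ (d + 2) ^ n := Nat.pow_le_pow_left (by omega) n
      have h3 : n < 2 ^ n := Nat.lt_two_pow_self (n := n)
      have h4 := ih.1
      have hp : (d + 2) ^ (n + 1 + 1) = (d + 2) ^ n * (d + 2) ^ 2 := by ring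
      rw [hr, hp]
      nlinarith [sq_nonneg d, Nat.one_le_two_pow (n := n)]
  exact fun x => (key x).1
end

section
/- Let G be a finite tree on a vertex set V and let h ≥ 1 be an integer. Assume that the diameter of G is exactly 2h, i.e., dist(u,w) ≤ 2h for all u,w ∈ V and dist(a,b) = 2h for some a,b ∈ V. Let c ∈ V be a vertex with dist(c,u) ≤ h for every u ∈ V (a central node), and let v ∈ V be a vertex with dist(v,c) ≥ h−1. Then every path in G starting at v whose length is at least 2h−1 contains c among its vertices. -/
open SimpleGraph

/-- Appending two paths that meet only at the junction gives a path. -/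
private lemma myIsPath_append {V : Type*} {G : SimpleGraph V} {u m w : V}
    {r : G.Walk u m} {s : G.Walk m w} (hr : r.IsPath) (hs : s.IsPath)
    (hd : ∀ x, x ∈ r.support → x ∈ s.support → x = m) : (r.append s).IsPath := by
  rw [SimpleGraph.Walk.isPath_def, SimpleGraph.Walk.support_append]
  refine List.Nodup.append hr.support_nodup ?_ ?_
  · exact (SimpleGraph.Walk.support_eq_cons s ▸ hs.support_nodup).of_cons
  · intro x hx hx'
    have hxs : x ∈ s.support := by
      rw [SimpleGraph.Walk.support_eq_cons s]; exact List.mem_cons_of_mem _ hx'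
    have hxm : x = m := hd x hx hxs
    subst hxm
    have := SimpleGraph.Walk.support_eq_cons s ▸ hs.support_nodup
    rw [List.nodup_cons] at this
    exact this.1 hx'

/-- In a tree, every path has length equal to the distance of its endpoints. -/
private lemma myTree_path_length {V : Type*} {G : SimpleGraph V} (hG : G.IsTree)
    {a b : V} {q : G.Walk a b} (hq : q.IsPath) : q.length = G.dist a b := by
  obtain ⟨P, hP, hlen⟩ := hG.isConnected.exists_path_of_dist a b
  have := hG.existsUnique_path a b
  obtain ⟨Q, -, hQ⟩ := this
  have h1 : q = Q := hQ q hq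
  have h2 : P = Q := hQ P hP
  rw [h1, ← h2, hlen]

/-- First meeting point of a path with the support of another walk. -/
private lemma myFirst_meet {V : Type*} {G : SimpleGraph V} {v w : V} (p : G.Walk v w) :
    ∀ {a b : V} (q : G.Walk a b), q.IsPath → b ∈ p.support →
      ∃ m, m ∈ p.support ∧ ∃ r : G.Walk a m, r.IsPath ∧
        (∀ x ∈ r.support, x ∈ q.support) ∧ (∀ x ∈ r.support, x ∈ p.support → x = m) := by
  intro a b q
  induction q with
  | @nil u =>
    intro _ hb
    exact ⟨u, hb, SimpleGraph.Walk.nil, by simp, by simp, by simp⟩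
  | @cons a a' b hadj q' ih =>
    intro hq hb
    by_cases ha : a ∈ p.support
    · exact ⟨a, ha, SimpleGraph.Walk.nil, by simp, by simp, by simp⟩
    · have hq' : q'.IsPath := hq.of_cons
      have hna : a ∉ q'.support := (SimpleGraph.Walk.cons_isPath_iff _ _).mp hq |>.2
      obtain ⟨m, hm, r', hr', hsub, hmeet⟩ := ih hq' hb
      refine ⟨m, hm, SimpleGraph.Walk.cons hadj r', ?_, ?_, ?_⟩
      · exact (SimpleGraph.Walk.cons_isPath_iff _ _).mpr ⟨hr', fun hx => hna (hsub a hx)⟩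
      · intro x hx
        rw [SimpleGraph.Walk.support_cons, List.mem_cons] at hx ⊢
        rcases hx with h | h
        · exact Or.inl h
        · exact Or.inr (hsub x h)
      · intro x hx hxp
        rw [SimpleGraph.Walk.support_cons, List.mem_cons] at hx
        rcases hx with h | h
        · exact absurd (h ▸ hxp) ha
        · exact hmeet x h hxp

/-- In a finite tree of diameter exactly `2h` (`h ≥ 1`) with central node `c`
(`dist(c,u) ≤ h` for all `u`), every path of length at least `2h−1` starting
at a vertex `v` with `dist(v,c) ≥ h−1` contains `c`. -/
theorem central_node_on_long_paths {V : Type*} [Fintype V]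
    (G : SimpleGraph V) (hG : G.IsTree) (h : ℕ) (hh : 1 ≤ h)
    (hdiam_le : ∀ u w : V, G.dist u w ≤ 2 * h)
    (hdiam_eq : ∃ a b : V, G.dist a b = 2 * h)
    (c : V) (hc : ∀ u : V, G.dist c u ≤ h)
    (v : V) (hv : h - 1 ≤ G.dist v c) :
    ∀ (w : V) (p : G.Walk v w), p.IsPath → 2 * h - 1 ≤ p.length →
      c ∈ p.support := by
  classical
  intro w p hp hlen
  by_contra hcm
  -- a path from c to v
  obtain ⟨q, hq, -⟩ := hG.isConnected.exists_path_of_dist c v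
  -- first meeting point m of q with p
  obtain ⟨m, hm, r, hr, -, hmeet⟩ :=
    myFirst_meet p q hq p.start_mem_support
  -- m ≠ c, so r has positive length
  have hmc : c ≠ m := fun hcm' => hcm (hcm' ▸ hm)
  have hrpos : 1 ≤ r.length := by
    rcases Nat.eq_zero_or_pos r.length with h0 | h0
    · exact absurd (SimpleGraph.Walk.eq_of_length_eq_zero h0) hmc
    · exact h0
  -- split p at m
  set t := p.takeUntil m hm with ht
  set s := p.dropUntil m hm with hs
  have htp : t.IsPath := hp.takeUntil hm
  have hsp : s.IsPath := hp.dropUntil hm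
  have hts : t.length + s.length = p.length := by
    conv_rhs => rw [← SimpleGraph.Walk.take_spec p hm]
    rw [SimpleGraph.Walk.length_append]
  have htsub : ∀ x ∈ t.support, x ∈ p.support :=
    fun x hx => SimpleGraph.Walk.support_takeUntil_subset p hm hx
  have hssub : ∀ x ∈ s.support, x ∈ p.support :=
    fun x hx => SimpleGraph.Walk.support_dropUntil_subset p hm hx
  -- distance from c to w
  have hcw : G.dist c w = r.length + s.length := by
    have : (r.append s).IsPath :=
      myIsPath_append hr hsp (fun x hx hx' => hmeet x hx (hssub x hx'))
    have := myTree_path_length hG this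
    rw [SimpleGraph.Walk.length_append] at this
    omega
  -- distance from c to v
  have hcv : G.dist c v = r.length + t.length := by
    have : (r.append t.reverse).IsPath := by
      refine myIsPath_append hr htp.reverse (fun x hx hx' => ?_)
      rw [SimpleGraph.Walk.support_reverse, List.mem_reverse] at hx'
      exact hmeet x hx (htsub x hx')
    have := myTree_path_length hG this
    rw [SimpleGraph.Walk.length_append, SimpleGraph.Walk.length_reverse] at this
    omega
  have h1 : G.dist c v ≤ h := hc v
  have h2 : G.dist c w ≤ h := hc w
  omega
end

section
/- Let G be a finite tree on a vertex set V and let h ≥ 1 be an integer. Assume that the diameter of G is exactly 2h+1, i.e., dist(u,w) ≤ 2h+1 for all u,w ∈ V and dist(a,b) = 2h+1 for some a,b ∈ V. Let c₀ and c₁ be adjacent vertices such that every vertex u ∈ V satisfies dist(u,c₀) ≤ h or dist(u,c₁) ≤ h (i.e., {c₀,c₁} is the central edge). Let v ∈ V be a vertex with dist(v,c₀) ≤ dist(v,c₁) and dist(v,c₀) ≥ h−1. Then every path in G starting at v whose length is at least 2h contains c₀ among its vertices. -/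
/-- If `y` lies on a geodesic from `a` to `b`, then `dist a y + dist y b ≤ dist a b`. -/
lemma dist_split_of_mem_geodesic {V : Type*} [DecidableEq V] {G : SimpleGraph V} {a b y : V}
    (r : G.Walk a b) (hr : r.length = G.dist a b) (hy : y ∈ r.support) :
    G.dist a y + G.dist y b ≤ G.dist a b := by
  have hspec := congrArg SimpleGraph.Walk.length (r.take_spec hy)
  rw [SimpleGraph.Walk.length_append] at hspec
  calc G.dist a y + G.dist y b
      ≤ (r.takeUntil y hy).length + (r.dropUntil y hy).length :=
        Nat.add_le_add (SimpleGraph.dist_le _) (SimpleGraph.dist_le _)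
    _ = r.length := hspec
    _ = G.dist a b := hr

/-- In a finite tree of diameter exactly `2h+1` (`h ≥ 1`) with central edge
`{c₀,c₁}` (every vertex is within distance `h` of `c₀` or of `c₁`), every
path of length at least `2h` starting at a vertex `v` whose closest endpoint
of the central edge is `c₀` and with `dist(v,c₀) ≥ h−1` contains `c₀`. -/
theorem central_edge_endpoint_on_long_paths {V : Type*} [Fintype V]
    (G : SimpleGraph V) (hG : G.IsTree) (h : ℕ) (hh : 1 ≤ h)
    (hdiam_le : ∀ u w : V, G.dist u w ≤ 2 * h + 1)
    (hdiam_eq : ∃ a b : V, G.dist a b = 2 * h + 1)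
    (c₀ c₁ : V) (hadj : G.Adj c₀ c₁)
    (hcentral : ∀ u : V, G.dist u c₀ ≤ h ∨ G.dist u c₁ ≤ h)
    (v : V) (hclose : G.dist v c₀ ≤ G.dist v c₁) (hv : h - 1 ≤ G.dist v c₀) :
    ∀ (w : V) (p : G.Walk v w), p.IsPath → 2 * h ≤ p.length →
      c₀ ∈ p.support := by
  classical
  intro w p hp hlen
  have hconn := hG.isConnected
  have hac := hG.IsAcyclic
  -- the path `p` is the geodesic, so `dist v w ≥ 2h`
  obtain ⟨s, hs⟩ := hconn.exists_walk_length_eq_dist v w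
  have hpeq : p = s.bypass := by
    have := hac.path_unique ⟨p, hp⟩ ⟨s.bypass, s.bypass_isPath⟩
    exact congrArg Subtype.val this
  have hdvw : 2 * h ≤ G.dist v w := by
    calc 2 * h ≤ p.length := hlen
      _ = s.bypass.length := by rw [hpeq]
      _ ≤ s.length := s.length_bypass_le
      _ = G.dist v w := hs
  -- distance bounds
  have hdc : G.dist c₀ c₁ ≤ 1 := by
    have := SimpleGraph.dist_le (hadj.toWalk)
    simpa using this
  have hvc0 : G.dist v c₀ ≤ h := by
    rcases hcentral v with h1 | h1
    · exact h1
    · exact le_trans hclose h1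
  have hc0w : G.dist c₀ w ≤ h + 1 := by
    have e1 : G.dist c₀ w = G.dist w c₀ := SimpleGraph.dist_comm
    have e2 : G.dist c₁ w = G.dist w c₁ := SimpleGraph.dist_comm
    have htri : G.dist c₀ w ≤ G.dist c₀ c₁ + G.dist c₁ w := hconn.dist_triangle
    rcases hcentral w with h1 | h1 <;> omega
  -- geodesics v → c₀ and c₀ → w
  obtain ⟨q1', hq1'⟩ := hconn.exists_walk_length_eq_dist v c₀
  obtain ⟨q2', hq2'⟩ := hconn.exists_walk_length_eq_dist c₀ w
  have hq1p : q1'.bypass.IsPath := q1'.bypass_isPath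
  have hq2p : q2'.bypass.IsPath := q2'.bypass_isPath
  set q1 := q1'.bypass with hq1def
  set q2 := q2'.bypass with hq2def
  have hq1 : q1.length = G.dist v c₀ :=
    le_antisymm (le_trans q1'.length_bypass_le (le_of_eq hq1')) (SimpleGraph.dist_le _)
  have hq2 : q2.length = G.dist c₀ w :=
    le_antisymm (le_trans q2'.length_bypass_le (le_of_eq hq2')) (SimpleGraph.dist_le _)
  by_cases hpath : (q1.append q2).IsPath
  · -- the concatenation is a path, hence equals `p`; it contains `c₀`
    have : p = q1.append q2 := by
      have := hac.path_unique ⟨p, hp⟩ ⟨q1.append q2, hpath⟩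
      exact congrArg Subtype.val this
    rw [this]
    exact (SimpleGraph.Walk.mem_support_append_iff q1 q2).mpr (Or.inl q1.end_mem_support)
  · -- otherwise geodesics overlap in some `y ≠ c₀`, contradicting `dist v w ≥ 2h`
    exfalso
    rw [SimpleGraph.Walk.isPath_def, SimpleGraph.Walk.support_append,
      List.nodup_append] at hpath
    have hnd1 : q1.support.Nodup := hq1p.support_nodup
    have hnd2' := hq2p.support_nodup
    rw [q2.support_eq_cons, List.nodup_cons] at hnd2'
    obtain ⟨hc0tail, hnd2⟩ := hnd2'
    have hndis : ¬ List.Disjoint q1.support q2.support.tail :=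
      fun hd => hpath ⟨hnd1, hnd2, fun a ha b hb hab => hd ha (by subst hab; exact hb)⟩
    simp only [List.Disjoint] at hndis
    push_neg at hndis
    obtain ⟨y, hy1, hy2, -⟩ := hndis
    have hyne : y ≠ c₀ := fun e => hc0tail (e ▸ hy2)
    have hy2' : y ∈ q2.support := List.mem_of_mem_tail hy2
    have h1 := dist_split_of_mem_geodesic q1 hq1 hy1
    have h2 := dist_split_of_mem_geodesic q2 hq2 hy2'
    have htri : G.dist v w ≤ G.dist v y + G.dist y w := hconn.dist_triangle
    have hypos : 0 < G.dist y c₀ := hconn.pos_dist_of_ne hyne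
    have hcomm : G.dist c₀ y = G.dist y c₀ := SimpleGraph.dist_comm
    omega
end
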